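/- Let K be a field and A = (α_{mn}) an M×N matrix with entries in T. Suppose there is a constant C₂ ≥ 0 such that for all nonnegative integers U₁,…,U_N, V₁,…,V_M, dim V(U₁,…,U_N; V₁,…,V_M) ≤ max(0, U₁+⋯+U_N − V₁−⋯−V_M) + C₂. Then for every nonzero ξ = (ξ₁,…,ξ_N) ∈ K[x]^N and every m ∈ {1,…,M}, one has ‖Σ_{n=1}^N α_{mn} ξ_n‖ ≠ 0; equivalently, Σ_{n=1}^N α_{mn} ξ_n is not a polynomial. -/

import Mathlib

open scoped BigOperators Classical

noncomputable section

variable {K : Type*} [Field K]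

/-- `x` as an element of `L = K((x⁻¹))`, realized as the Laurent series in `t = x⁻¹`
supported at the single exponent `-1`. -/
def xL (K : Type*) [Field K] : LaurentSeries K := HahnSeries.single (-1 : ℤ) 1

/-- The embedding of the polynomial ring `K[x]` into `L = K((x⁻¹))`. -/
def toL (P : Polynomial K) : LaurentSeries K := Polynomial.aeval (xL K) P

/-- The absolute value on `L`: `|0| = 0` and `|F| = e^M` where `M` is the degree in `x`
of the leading term of `F` (i.e. `M = -(order of F as a series in t = x⁻¹)`). -/
def absL (F : LaurentSeries K) : ℝ := if F = 0 then 0 else Real.exp (-(F.order : ℝ))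

/-- `‖F‖`, the distance from `F` to the nearest polynomial in `x`. -/
def normL (F : LaurentSeries K) : ℝ :=
  sInf { r : ℝ | ∃ P : Polynomial K, r = absL (F - toL P) }

/-- The solution space `V(U₁,…,U_N; V₁,…,V_M)` of the system
`|ξ_n| < e^{U_n}` and `‖∑_n α_{mn} ξ_n‖ < e^{-V_m}`. -/
def VSet {M N : ℕ} (A : Matrix (Fin M) (Fin N) (LaurentSeries K))
    (U : Fin N → ℕ) (V : Fin M → ℕ) : Set (Fin N → Polynomial K) :=
  { ξ | (∀ n, absL (toL (ξ n)) < Real.exp (U n)) ∧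
        (∀ m, normL (∑ n, A m n * toL (ξ n)) < Real.exp (-(V m : ℝ))) }

/-- `dim V(U₁,…,U_N; V₁,…,V_M)` as a `K`-vector space. -/
def dimV {M N : ℕ} (A : Matrix (Fin M) (Fin N) (LaurentSeries K))
    (U : Fin N → ℕ) (V : Fin M → ℕ) : ℕ :=
  Module.finrank K (Submodule.span K (VSet A U V))

/-- An `M × N` matrix with entries in `T = L/K[x]` is strongly badly approximable if
there is `C₁ > 0` with `e^{-C₁} < (∏_m ‖∑_n α_{mn} ξ_n‖) (∏_n max(|ξ_n|,1))`
for all nonzero `ξ ∈ K[x]^N`. -/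
def StronglyBadlyApproximable {M N : ℕ}
    (A : Matrix (Fin M) (Fin N) (LaurentSeries K)) : Prop :=
  ∃ C₁ : ℝ, 0 < C₁ ∧ ∀ ξ : Fin N → Polynomial K, ξ ≠ 0 →
    Real.exp (-C₁) <
      (∏ m, normL (∑ n, A m n * toL (ξ n))) * (∏ n, max (absL (toL (ξ n))) 1)

/-- The `V × U` Hankel matrix `M_{U;V}(α)` with `(i,j)` entry `a_{i+j-1}` (1-indexed),
where `a_i` is the coefficient of `x^{-i}` in `α`. -/
def hankel (α : LaurentSeries K) (U V : ℕ) : Matrix (Fin V) (Fin U) K :=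
  Matrix.of fun i j => α.coeff ((i : ℤ) + (j : ℤ) + 1)

/-- The block matrix `M_{U₁,…,U_N; V₁,…,V_M}(A)` whose `(m,n)` block is
`M_{U_n; V_m}(α_{mn})`. -/
def blockM {M N : ℕ} (A : Matrix (Fin M) (Fin N) (LaurentSeries K))
    (U : Fin N → ℕ) (V : Fin M → ℕ) :
    Matrix ((m : Fin M) × Fin (V m)) ((n : Fin N) × Fin (U n)) K :=
  Matrix.of fun i j => hankel (A i.1 j.1) (U j.1) (V i.1) i.2 j.2

open Polynomial

lemma algebraMap_L (a : K) : (algebraMap K (LaurentSeries K)) a = HahnSeries.single (0:ℤ) a := by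
  rw [HahnSeries.algebraMap_apply', ← PowerSeries.C_eq_algebraMap, HahnSeries.ofPowerSeries_C,
    HahnSeries.C_apply]

lemma toL_coeff (P : K[X]) (k : ℤ) :
    (toL P).coeff k = if 0 < k then 0 else P.coeff (-k).toNat := by
  induction P using Polynomial.induction_on' with
  | add p q hp hq =>
      simp only [toL, map_add, HahnSeries.coeff_add, Polynomial.coeff_add] at *
      rw [hp, hq]; split_ifs <;> simp
  | monomial n a =>
      have h1 : toL (monomial n a : K[X]) = HahnSeries.single (-(n:ℤ)) a := by
        rw [toL, aeval_monomial, xL, HahnSeries.single_pow, algebraMap_L,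
          HahnSeries.single_mul_single]
        norm_num
      rw [h1, HahnSeries.coeff_single, Polynomial.coeff_monomial]
      split_ifs <;> first | rfl | (exfalso; omega)

lemma toL_eq_zero {P : K[X]} (h : toL P = 0) : P = 0 := by
  ext n
  have := toL_coeff P (-(n:ℤ))
  rw [h] at this
  simp at this
  simpa using this.symm

lemma toL_ne_zero {P : K[X]} (h : P ≠ 0) : toL P ≠ 0 := fun hc => h (toL_eq_zero hc)

lemma order_toL {P : K[X]} (h : P ≠ 0) : (toL P).order = -(P.natDegree : ℤ) := by
  apply le_antisymm
  · apply HahnSeries.order_le_of_coeff_ne_zero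
    rw [toL_coeff]
    simpa using Polynomial.leadingCoeff_ne_zero.mpr h
  · have hne := toL_ne_zero h
    have hc := (HahnSeries.coeff_order_eq_zero.not.2 hne)
    rw [toL_coeff] at hc
    by_contra hlt
    push_neg at hlt
    split_ifs at hc with h1
    · exact hc rfl
    · push_neg at h1
      exact hc (Polynomial.coeff_eq_zero_of_natDegree_lt (by omega))

lemma absL_toL {P : K[X]} (h : P ≠ 0) : absL (toL P) = Real.exp (P.natDegree) := by
  rw [absL, if_neg (toL_ne_zero h), order_toL h]
  norm_num

lemma absL_nonneg (F : LaurentSeries K) : 0 ≤ absL F := by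
  rw [absL]; split_ifs
  · exact le_refl 0
  · exact (Real.exp_pos _).le

lemma absL_mul (F G : LaurentSeries K) : absL (F * G) = absL F * absL G := by
  by_cases hF : F = 0
  · simp [absL, hF]
  by_cases hG : G = 0
  · simp [absL, hG]
  rw [absL, absL, absL, if_neg hF, if_neg hG, if_neg (mul_ne_zero hF hG),
    HahnSeries.order_mul hF hG, ← Real.exp_add]
  push_cast; ring_nf

lemma normL_set_nonempty (F : LaurentSeries K) :
    Set.Nonempty {r | ∃ P : K[X], r = absL (F - toL P)} := ⟨_, 0, rfl⟩

lemma normL_bddBelow (F : LaurentSeries K) :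
    BddBelow {r | ∃ P : K[X], r = absL (F - toL P)} :=
  ⟨0, by rintro r ⟨P, rfl⟩; exact absL_nonneg _⟩

lemma normL_nonneg (F : LaurentSeries K) : 0 ≤ normL F :=
  le_csInf (normL_set_nonempty F) (by rintro r ⟨P, rfl⟩; exact absL_nonneg _)

lemma normL_le (F : LaurentSeries K) (P : K[X]) : normL F ≤ absL (F - toL P) :=
  csInf_le (normL_bddBelow F) ⟨P, rfl⟩

lemma exists_polypart (F : LaurentSeries K) :
    ∃ P : K[X], ∀ k : ℤ, k ≤ 0 → (F - toL P).coeff k = 0 := by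
  have hfin : {k : ℤ | F.coeff k ≠ 0 ∧ k ≤ 0}.Finite := by
    apply (Set.finite_Icc F.order 0).subset
    rintro k ⟨hk, hk0⟩
    exact ⟨HahnSeries.order_le_of_coeff_ne_zero hk, hk0⟩
  refine ⟨∑ k ∈ hfin.toFinset, Polynomial.monomial (-k).toNat (F.coeff k), fun k hk => ?_⟩
  rw [HahnSeries.coeff_sub, toL_coeff, if_neg (by omega), Polynomial.finset_sum_coeff]
  have hco : ∀ j ∈ hfin.toFinset, (Polynomial.monomial (-j).toNat (F.coeff j)).coeff (-k).toNat
      = if j = k then F.coeff k else 0 := by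
    intro j hj
    rw [Polynomial.coeff_monomial]
    have hj0 : j ≤ 0 := (hfin.mem_toFinset.mp hj).2
    by_cases hjk : j = k
    · subst hjk; rw [if_pos rfl, if_pos rfl]
    · rw [if_neg (by omega), if_neg hjk]
  rw [Finset.sum_congr rfl hco, Finset.sum_ite_eq' hfin.toFinset k (fun _ => F.coeff k)]
  by_cases hk2 : k ∈ hfin.toFinset
  · rw [if_pos hk2]; ring
  · rw [if_neg hk2]
    have hFk : F.coeff k = 0 := by
      by_contra hne; exact hk2 (hfin.mem_toFinset.mpr ⟨hne, hk⟩)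
    rw [hFk]; ring

lemma normL_le_exp_neg_one (F : LaurentSeries K) : normL F ≤ Real.exp (-1) := by
  obtain ⟨P, hP⟩ := exists_polypart F
  refine le_trans (normL_le F P) ?_
  rw [absL]
  split_ifs with h
  · positivity
  · apply Real.exp_le_exp.mpr
    have h1 : (1:ℤ) ≤ (F - toL P).order := by
      by_contra hlt
      push_neg at hlt
      exact (HahnSeries.coeff_order_eq_zero.not.2 h) (hP _ (by omega))
    have h2 : (1:ℝ) ≤ ((F - toL P).order : ℝ) := by exact_mod_cast h1
    linarith

lemma normL_lt_one (F : LaurentSeries K) : normL F < 1 :=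
  lt_of_le_of_lt (normL_le_exp_neg_one F)
    (by rw [Real.exp_lt_one_iff]; norm_num)

lemma toL_zero : toL (0 : K[X]) = 0 := map_zero (Polynomial.aeval (xL K))

lemma toL_mul (P Q : K[X]) : toL (P * Q) = toL P * toL Q := map_mul (Polynomial.aeval (xL K)) P Q

lemma normL_zero : normL (0 : LaurentSeries K) = 0 := by
  refine le_antisymm ?_ (normL_nonneg 0)
  have := normL_le (0 : LaurentSeries K) 0
  rw [toL_zero, sub_zero] at this
  simpa [absL] using this

lemma normL_toL_mul {F : LaurentSeries K} (hF : normL F = 0) (Q : K[X]) :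
    normL (toL Q * F) = 0 := by
  by_cases hQ : Q = 0
  · rw [hQ, toL_zero, zero_mul, normL_zero]
  refine le_antisymm ?_ (normL_nonneg _)
  by_contra hpos
  push_neg at hpos
  set ε := normL (toL Q * F) with hε
  have hc : 0 < absL (toL Q) := by rw [absL_toL hQ]; exact Real.exp_pos _
  have h2 : normL F < ε / absL (toL Q) := by rw [hF]; positivity
  rw [normL] at h2
  obtain ⟨r, ⟨P, rfl⟩, hr⟩ := exists_lt_of_csInf_lt (normL_set_nonempty F) h2
  have key : ε ≤ absL (toL Q) * absL (F - toL P) := by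
    have heq : toL Q * F - toL (Q * P) = toL Q * (F - toL P) := by
      rw [toL_mul]; ring
    calc ε ≤ absL (toL Q * F - toL (Q * P)) := normL_le _ _
      _ = absL (toL Q) * absL (F - toL P) := by rw [heq, absL_mul]
  rw [lt_div_iff₀ hc] at hr
  have : ε < ε := lt_of_le_of_lt key (by linarith [mul_comm (absL (toL Q)) (absL (F - toL P))])
  exact lt_irrefl ε this

lemma absL_toL_lt {P : K[X]} {u : ℕ} (h : P.natDegree < u) : absL (toL P) < Real.exp u := by
  by_cases hP : P = 0
  · rw [hP, toL_zero]
    simp only [absL, if_pos rfl]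
    positivity
  · rw [absL_toL hP]
    exact Real.exp_lt_exp.mpr (by exact_mod_cast h)

lemma degree_lt_of_absL_lt {P : K[X]} {u : ℕ} (h : absL (toL P) < Real.exp u) :
    P.degree < (u : ℕ) := by
  by_cases hP : P = 0
  · rw [hP, Polynomial.degree_zero]; exact WithBot.bot_lt_coe _
  · rw [absL_toL hP, Real.exp_lt_exp] at h
    exact (Polynomial.natDegree_lt_iff_degree_lt hP).mp (by exact_mod_cast h)

/-- if there is `C₂ ≥ 0` with
`dim V(U₁,…,U_N; V₁,…,V_M) ≤ max(0, U₁+⋯+U_N − V₁−⋯−V_M) + C₂` for all nonnegative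
integers `U`, `V`, then for every nonzero `ξ ∈ K[x]^N` and every `m`, one has
`‖∑_n α_{mn} ξ_n‖ ≠ 0`. -/
theorem norm_ne_zero_of_dimV_le {K : Type*} [Field K] {M N : ℕ}
    (A : Matrix (Fin M) (Fin N) (LaurentSeries K)) (C₂ : ℝ) (hC₂ : 0 ≤ C₂)
    (h : ∀ (U : Fin N → ℕ) (V : Fin M → ℕ),
      (dimV A U V : ℝ) ≤
        ((max 0 ((∑ n, (U n : ℤ)) - ∑ m, (V m : ℤ)) : ℤ) : ℝ) + C₂) :
    ∀ ξ : Fin N → Polynomial K, ξ ≠ 0 →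
      ∀ m : Fin M, normL (∑ n, A m n * toL (ξ n)) ≠ 0 := by
  intro ξ hξ m₀
  by_contra h0
  obtain ⟨n₀, hn₀⟩ := Function.ne_iff.mp hξ
  set d : ℕ := ∑ n, (ξ n).natDegree with hd
  have hdle : ∀ n, (ξ n).natDegree ≤ d :=
    fun n => Finset.single_le_sum (f := fun n => (ξ n).natDegree)
      (fun _ _ => Nat.zero_le _) (Finset.mem_univ n)
  set t : ℕ := Nat.ceil C₂ + 1 with ht
  set u : ℕ := t + d with hu
  set W : ℕ := N * u with hW
  set U : Fin N → ℕ := fun _ => u with hU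
  set V : Fin M → ℕ := fun m => if m = m₀ then W else 0 with hV
  -- membership of the family Q • ξ in VSet
  have hmem : ∀ Q : Polynomial K, Q ∈ Polynomial.degreeLT K t →
      (fun n => Q * ξ n) ∈ VSet A U V := by
    intro Q hQ
    refine ⟨fun n => ?_, fun m => ?_⟩
    · show absL (toL (Q * ξ n)) < Real.exp ((U n : ℕ) : ℝ)
      have hQt : Q.natDegree < t := by
        by_cases hQ0 : Q = 0
        · rw [hQ0, Polynomial.natDegree_zero]; omega
        · exact (Polynomial.natDegree_lt_iff_degree_lt hQ0).mpr (Polynomial.mem_degreeLT.mp hQ)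
      have : (Q * ξ n).natDegree < U n := by
        calc (Q * ξ n).natDegree ≤ Q.natDegree + (ξ n).natDegree := Polynomial.natDegree_mul_le
          _ < t + d := by have := hdle n; omega
      exact absL_toL_lt this
    · have hsum : ∑ n, A m n * toL (Q * ξ n) = toL Q * ∑ n, A m n * toL (ξ n) := by
        rw [Finset.mul_sum]
        refine Finset.sum_congr rfl fun n _ => ?_
        rw [toL_mul]; ring
      show normL (∑ n, A m n * toL (Q * ξ n)) < Real.exp (-(V m : ℝ))
      rw [hsum]
      by_cases hm : m = m₀
      · subst hm
        rw [normL_toL_mul h0]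
        exact Real.exp_pos _
      · have hVm : V m = 0 := if_neg hm
        rw [hVm]
        simpa using normL_lt_one _
  -- the t-dimensional family
  let φ : Polynomial.degreeLT K t →ₗ[K] (Fin N → Polynomial K) :=
    { toFun := fun Q => fun n => (Q : Polynomial K) * ξ n
      map_add' := by intro a b; funext n; simp [add_mul]
      map_smul' := by intro c a; funext n; simp [smul_mul_assoc]
      }
  have hφinj : Function.Injective φ := by
    rw [← LinearMap.ker_eq_bot, LinearMap.ker_eq_bot']
    intro Q hQ
    have h1 : (Q : Polynomial K) * ξ n₀ = 0 := congrFun hQ n₀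
    rcases mul_eq_zero.mp h1 with h2 | h2
    · exact Subtype.ext h2
    · exact absurd h2 hn₀
  have hrange : LinearMap.range φ ≤ Submodule.span K (VSet A U V) := by
    rintro _ ⟨Q, rfl⟩
    exact Submodule.subset_span (hmem Q Q.2)
  -- finite dimensionality of the span
  haveI : FiniteDimensional K (Polynomial.degreeLT K u) :=
    Module.Finite.equiv (Polynomial.degreeLTEquiv K u).symm
  let ψ : (Fin N → Polynomial.degreeLT K u) →ₗ[K] (Fin N → Polynomial K) :=
    LinearMap.pi (fun n => (Polynomial.degreeLT K u).subtype.comp (LinearMap.proj n))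
  have hspan : Submodule.span K (VSet A U V) ≤ LinearMap.range ψ := by
    rw [Submodule.span_le]
    intro ξ' hξ'
    obtain ⟨h1, h2⟩ := hξ'
    exact ⟨fun n => ⟨ξ' n, Polynomial.mem_degreeLT.mpr (degree_lt_of_absL_lt (h1 n))⟩, rfl⟩
  haveI hFD : FiniteDimensional K ↥(Submodule.span K (VSet A U V)) :=
    Submodule.finiteDimensional_of_le hspan
  haveI : FiniteDimensional K (Polynomial.degreeLT K t) :=
    Module.Finite.equiv (Polynomial.degreeLTEquiv K t).symm
  have hdim : t ≤ dimV A U V := by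
    have h1 : Module.finrank K ↥(LinearMap.range φ) = t := by
      rw [LinearMap.finrank_range_of_inj hφinj,
        LinearEquiv.finrank_eq (Polynomial.degreeLTEquiv K t), Module.finrank_fin_fun]
    rw [dimV, ← h1]
    exact Submodule.finrank_mono hrange
  -- plug into the hypothesis
  have hsU : (∑ n, ((U n : ℤ))) = (W : ℤ) := by
    simp only [hU, Finset.sum_const, Finset.card_univ, Fintype.card_fin, smul_eq_mul, hW]
    push_cast; ring
  have hsV : (∑ m, ((V m : ℤ))) = (W : ℤ) := by
    have he : ∀ m, ((V m : ℤ)) = if m = m₀ then (W : ℤ) else 0 := by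
      intro m; simp only [hV]; split_ifs <;> simp
    rw [Finset.sum_congr rfl (fun m _ => he m)]
    simp
  have hbound := h U V
  rw [hsU, hsV, sub_self, max_self] at hbound
  have hC : (dimV A U V : ℝ) ≤ C₂ := by simpa using hbound
  have h2 : (t : ℝ) ≤ C₂ := le_trans (by exact_mod_cast hdim) hC
  have h3 : C₂ < (t : ℝ) := by
    calc C₂ ≤ (Nat.ceil C₂ : ℝ) := Nat.le_ceil C₂
      _ < t := by rw [ht]; push_cast; linarith
  linarith
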